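/- Let α ∈ (0,1/2) and let γ ≥ 0 be an integer. Then there exist a real number c with 0 < c < (1−α)/k_γ, a real number ε > 0, and a strictly increasing sequence (m_i) of positive integers such that for every i there is no integer a ≥ 1 with a + (γ+1)(4^a−1)/3 ∈ (c·k_γ·f(m_i), k_γ·f(m_i) + ε). -/

import Mathlib

open Filter FirstOrder

noncomputable section

/-! ### The binomial random graph `G(n,p)` -/

/-- The number of edges of a simple graph. -/
noncomputable def edgeCt {n : ℕ} (G : SimpleGraph (Fin n)) : ℕ := Nat.card G.edgeSet

open scoped Classical in
/-- `prob n p Q` is the probability that the binomial random graph `G(n,p)` (on vertex set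
`Fin n`) has property `Q`: the sum over all graphs `G` with `Q G` of
`p^{e(G)} (1-p)^{n(n-1)/2 - e(G)}`. -/
noncomputable def prob (n : ℕ) (p : ℝ) (Q : SimpleGraph (Fin n) → Prop) : ℝ :=
  ∑ G : SimpleGraph (Fin n),
    if Q G then p ^ edgeCt G * (1 - p) ^ (n * (n - 1) / 2 - edgeCt G) else 0

/-- `expec n p W` is the expectation of a real-valued function `W` of the binomial random
graph `G(n,p)`. -/
noncomputable def expec (n : ℕ) (p : ℝ) (W : SimpleGraph (Fin n) → ℝ) : ℝ :=
  ∑ G : SimpleGraph (Fin n),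
    W G * (p ^ edgeCt G * (1 - p) ^ (n * (n - 1) / 2 - edgeCt G))

/-! ### The graphs `W_a^γ` and `W_a^{γ,*}` -/

/-- `ωr r a = (r^a − 1)/(r−1)`, the number of vertices of the perfect `r`-ary tree of
depth `a − 1`. -/
def ωr (r a : ℕ) : ℕ := (r ^ a - 1) / (r - 1)

/-- The depth of the node with (0-based) breadth-first (heap) index `j` in the infinite
`r`-ary tree: the root has index 0, and the parent of node `j ≥ 1` is node `(j−1)/r`. -/
def heapDepth (r : ℕ) : ℕ → ℕ
  | 0 => 0
  | j + 1 => heapDepth r (j / r) + 1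
  decreasing_by exact Nat.lt_succ_of_le (Nat.div_le_self _ _)

/-- The vertex set of `W_a^γ`: the path `F₁` on `a` vertices (`Sum.inl`), together with,
for each of the `(4^a−1)/3` vertices `i` of the perfect 4-ary tree `F₂` (in breadth-first
order), the vertex `(i,0)` of `F₂` itself and the `γ` inner vertices `(i,1),…,(i,γ)` of the
path `P_{γ+2}` joining `i` to the vertex of `F₁` at the same distance from the root. -/
abbrev WVert (γ a : ℕ) := Fin a ⊕ (Fin (ωr 4 a) × Fin (γ + 1))

/-- Base (directed) adjacency relation generating `W_a^γ`: consecutive `F₁`-vertices;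
the last inner path vertex `(i,γ)` is joined to the `F₁`-vertex at depth of `i`;
consecutive vertices along each `P_{γ+2}`; and tree edges of the perfect 4-ary tree
(in heap indexing, `j` is the parent of `i ≥ 1` iff `j = (i−1)/4`). -/
def Wbase (γ a : ℕ) : WVert γ a → WVert γ a → Prop
  | Sum.inl u, Sum.inl v => (v : ℕ) = (u : ℕ) + 1
  | Sum.inl u, Sum.inr iv => (iv.2 : ℕ) = γ ∧ heapDepth 4 (iv.1 : ℕ) = (u : ℕ)
  | Sum.inr _, Sum.inl _ => False
  | Sum.inr iv, Sum.inr jw =>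
      (iv.1 = jw.1 ∧ (jw.2 : ℕ) = (iv.2 : ℕ) + 1) ∨
      ((iv.2 : ℕ) = 0 ∧ (jw.2 : ℕ) = 0 ∧ 1 ≤ (iv.1 : ℕ) ∧ (jw.1 : ℕ) = ((iv.1 : ℕ) - 1) / 4)

/-- The graph `W_a^γ`. -/
def WG (γ a : ℕ) : SimpleGraph (WVert γ a) := SimpleGraph.fromRel (Wbase γ a)

/-- The vertex set of `W_a^{γ,*}` (with `ω₁ = ωr r a`, `ω₂ = ωr r ω₁`), as five pieces:
the path `F₁` on `a` vertices; the tree `F₂` together with the inner vertices of the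
paths `P_{γ+2}` joining `F₂` to `F₁` (pairs `(i,k)`, `k = 0` being the `F₂`-vertex itself);
the `γ` inner vertices of the paths `P_{γ+2}` joining the `i`-th vertex of `F₂` (in
breadth-first order) to the `i`-th vertex of the path `F̃₁`; the path `F̃₁` on `ω₁`
vertices; and the tree `F̃₂` together with the inner vertices of the paths `P_{γ+2}`
joining `F̃₂` to `F̃₁`. -/
abbrev WSVert (γ r a : ℕ) :=
  Fin a ⊕ ((Fin (ωr r a) × Fin (γ + 1)) ⊕ ((Fin (ωr r a) × Fin γ) ⊕
    (Fin (ωr r a) ⊕ (Fin (ωr r (ωr r a)) × Fin (γ + 1)))))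

/-- Base (directed) adjacency relation generating `W_a^{γ,*}`. -/
def WSbase (γ r a : ℕ) : WSVert γ r a → WSVert γ r a → Prop
  | .inl u, .inl v => (v : ℕ) = (u : ℕ) + 1
  | .inl u, .inr (.inl iv) => (iv.2 : ℕ) = γ ∧ heapDepth r (iv.1 : ℕ) = (u : ℕ)
  | .inr (.inl iv), .inr (.inl jw) =>
      (iv.1 = jw.1 ∧ (jw.2 : ℕ) = (iv.2 : ℕ) + 1) ∨
      ((iv.2 : ℕ) = 0 ∧ (jw.2 : ℕ) = 0 ∧ 1 ≤ (iv.1 : ℕ) ∧ (jw.1 : ℕ) = ((iv.1 : ℕ) - 1) / r)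
  | .inr (.inl iv), .inr (.inr (.inl jm)) => (iv.2 : ℕ) = 0 ∧ iv.1 = jm.1 ∧ (jm.2 : ℕ) = 0
  | .inr (.inl iv), .inr (.inr (.inr (.inl d))) => γ = 0 ∧ (iv.2 : ℕ) = 0 ∧ (iv.1 : ℕ) = (d : ℕ)
  | .inr (.inr (.inl im)), .inr (.inr (.inl jm)) => im.1 = jm.1 ∧ (jm.2 : ℕ) = (im.2 : ℕ) + 1
  | .inr (.inr (.inl im)), .inr (.inr (.inr (.inl d))) =>
      (im.2 : ℕ) + 1 = γ ∧ (im.1 : ℕ) = (d : ℕ)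
  | .inr (.inr (.inr (.inl d))), .inr (.inr (.inr (.inl e))) => (e : ℕ) = (d : ℕ) + 1
  | .inr (.inr (.inr (.inl d))), .inr (.inr (.inr (.inr jw))) =>
      (jw.2 : ℕ) = γ ∧ heapDepth r (jw.1 : ℕ) = (d : ℕ)
  | .inr (.inr (.inr (.inr iv))), .inr (.inr (.inr (.inr jw))) =>
      (iv.1 = jw.1 ∧ (jw.2 : ℕ) = (iv.2 : ℕ) + 1) ∨
      ((iv.2 : ℕ) = 0 ∧ (jw.2 : ℕ) = 0 ∧ 1 ≤ (iv.1 : ℕ) ∧ (jw.1 : ℕ) = ((iv.1 : ℕ) - 1) / r)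
  | _, _ => False

/-- The graph `W_a^{γ,*}`. -/
def WSG (γ r a : ℕ) : SimpleGraph (WSVert γ r a) := SimpleGraph.fromRel (WSbase γ r a)

/-- `Vnum γ r a = V_{γ,r}(a) = a + 2(γ+1)ω_r(a) + (γ+1)ω_r(ω_r(a))`,
the number of vertices of `W_a^{γ,*}`. -/
def Vnum (γ r a : ℕ) : ℕ := a + 2 * (γ + 1) * ωr r a + (γ + 1) * ωr r (ωr r a)

/-- `s` is (the vertex set of) an induced copy of `H` in `G`. -/
def IsInducedCopy {V W : Type} (H : SimpleGraph W) (G : SimpleGraph V) (s : Set V) : Prop :=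
  Nonempty (H ≃g G.induce s)

/-! ### The quantities `k_γ` and `f` -/

/-- `kcoef α γ = k_γ = 2(1 − α(γ+2)/(γ+1))`. -/
def kcoef (α : ℝ) (γ : ℕ) : ℝ := 2 * (1 - α * ((γ : ℝ) + 2) / ((γ : ℝ) + 1))

/-- `ff α x = f(x) = x^α · ln x`. -/
def ff (α x : ℝ) : ℝ := x ^ α * Real.log x

/-! ### The language `L_m` and EMSO satisfaction -/

/-- Relation symbols of the language `L_m`: `m` unary symbols and one binary symbol. -/
def LRel (m : ℕ) : ℕ → Type
  | 1 => Fin m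
  | 2 => Unit
  | _ => Empty

/-- The first-order language `L_m`: one binary relation symbol, `m` unary relation symbols
and no function symbols. -/
def Lang (m : ℕ) : Language where
  Functions := fun _ => Empty
  Relations := LRel m

/-- The `L_m`-structure on `Fin n` whose binary relation is adjacency in the graph `G` and
whose `i`-th unary relation is membership in `S i`. -/
def structOf {n m : ℕ} (G : SimpleGraph (Fin n)) (S : Fin m → Set (Fin n)) :
    (Lang m).Structure (Fin n) where
  funMap := fun f _ => Empty.elim f
  RelMap := fun {k} r v =>
    match k, r, v with
    | 1, i, v => v 0 ∈ S i
    | 2, _, v => G.Adj (v 0) (v 1)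
    | 0, r, _ => Empty.elim r
    | (_ + 3), r, _ => Empty.elim r

/-- `G` EMSO-satisfies the `L_m`-sentence `φ`: there are sets `S 0, …, S (m-1)` of vertices
such that the structure on `Fin n` given by adjacency in `G` and membership in the `S i`
satisfies `φ`. -/
def EMSOSat {n m : ℕ} (G : SimpleGraph (Fin n)) (φ : (Lang m).Sentence) : Prop :=
  ∃ S : Fin m → Set (Fin n),
    @FirstOrder.Language.Sentence.Realize (Lang m) (Fin n) (structOf G S) φ


/-! ### Auxiliary lemmas for `stmt18` -/

lemma ff_mono_aux {α : ℝ} (hα : 0 ≤ α) {n n' : ℕ} (h1 : 1 ≤ n) (h : n ≤ n') :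
    ff α n ≤ ff α n' := by
  have h1' : (1:ℝ) ≤ (n:ℝ) := by exact_mod_cast h1
  have h' : (n:ℝ) ≤ (n':ℝ) := by exact_mod_cast h
  unfold ff
  exact mul_le_mul (Real.rpow_le_rpow (by linarith) h' hα)
    (Real.log_le_log (by linarith) h') (Real.log_nonneg h1')
    (Real.rpow_nonneg (by linarith) _)

lemma ff_unbounded_aux {α : ℝ} (hα : 0 < α) (B : ℝ) : ∃ n : ℕ, B ≤ ff α n := by
  refine ⟨⌈Real.exp B⌉₊ + 1, ?_⟩
  set n : ℕ := ⌈Real.exp B⌉₊ + 1 with hn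
  have hn1 : (1:ℝ) ≤ (n:ℝ) := by exact_mod_cast Nat.one_le_iff_ne_zero.mpr (by omega)
  have hexp : Real.exp B ≤ (n:ℝ) := by
    calc Real.exp B ≤ (⌈Real.exp B⌉₊ : ℝ) := Nat.le_ceil _
    _ ≤ (n:ℝ) := by exact_mod_cast Nat.le_succ _
  have hlogB : B ≤ Real.log n := by
    have := Real.log_le_log (Real.exp_pos B) hexp
    rwa [Real.log_exp] at this
  have hlog0 : 0 ≤ Real.log n := Real.log_nonneg hn1
  have hpow : (1:ℝ) ≤ (n:ℝ) ^ α := by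
    calc (1:ℝ) = (1:ℝ) ^ α := (Real.one_rpow α).symm
    _ ≤ (n:ℝ) ^ α := Real.rpow_le_rpow (by norm_num) hn1 hα.le
  calc B ≤ Real.log n := hlogB
  _ ≤ (n:ℝ) ^ α * Real.log n := le_mul_of_one_le_left hlog0 hpow
  _ = ff α n := rfl

lemma ff_step_aux {α : ℝ} (hα0 : 0 < α) (hα1 : α < 1) (n : ℕ) (hn : 1 ≤ n) :
    ff α ((n:ℝ) + 1) ≤ ff α n + (1 + 2 * α / (1 - α)) := by
  have hx : (1:ℝ) ≤ (n:ℝ) := by exact_mod_cast hn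
  set x : ℝ := (n:ℝ) with hxdef
  have hx0 : (0:ℝ) < x := by linarith
  have h1α : (0:ℝ) < 1 - α := by linarith
  have hsplit : x + 1 = x * (1 + 1/x) := by field_simp
  have hxa : (0:ℝ) ≤ x ^ α := Real.rpow_nonneg hx0.le _
  have hbern : (1 + 1/x) ^ α ≤ 1 + α * (1/x) :=
    rpow_one_add_le_one_add_mul_self
      (by have : (0:ℝ) ≤ 1/x := by positivity
          linarith) hα0.le hα1.le
  have hpow_le : (x+1) ^ α ≤ x ^ α + α * x ^ α / x := by
    calc (x+1) ^ α = x ^ α * (1 + 1/x) ^ α := by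
          rw [hsplit, Real.mul_rpow hx0.le (by positivity)]
    _ ≤ x ^ α * (1 + α * (1/x)) := mul_le_mul_of_nonneg_left hbern hxa
    _ = x ^ α + α * x ^ α / x := by field_simp
  have hlog1 : Real.log (x+1) ≤ Real.log x + 1/x := by
    rw [hsplit, Real.log_mul (ne_of_gt hx0) (by positivity)]
    have h := Real.log_le_sub_one_of_pos (show (0:ℝ) < 1 + 1/x by positivity)
    linarith
  have hlogp : 0 ≤ Real.log (x+1) := Real.log_nonneg (by linarith)
  have hlogx : 0 ≤ Real.log x := Real.log_nonneg hx
  have hxax : x ^ α ≤ x := by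
    calc x ^ α ≤ x ^ (1:ℝ) := Real.rpow_le_rpow_of_exponent_le hx hα1.le
    _ = x := Real.rpow_one x
  have hlog2 : Real.log (x+1) ≤ (x+1) ^ (1-α) / (1-α) :=
    Real.log_le_rpow_div (by linarith) h1α
  have h2x : (x+1) ^ (1-α) ≤ 2 * x ^ (1-α) := by
    calc (x+1) ^ (1-α) ≤ (2*x) ^ (1-α) :=
          Real.rpow_le_rpow (by linarith) (by linarith) h1α.le
    _ = 2 ^ (1-α) * x ^ (1-α) := Real.mul_rpow (by norm_num) hx0.le
    _ ≤ 2 * x ^ (1-α) := by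
        have h1 : (2:ℝ) ^ (1-α) ≤ 2 ^ (1:ℝ) :=
          Real.rpow_le_rpow_of_exponent_le (by norm_num) (by linarith)
        have h2 : (2:ℝ) ^ (1:ℝ) = 2 := Real.rpow_one 2
        nlinarith [Real.rpow_nonneg hx0.le (1-α)]
  have hprod : x ^ α * x ^ (1-α) = x := by
    rw [← Real.rpow_add hx0]; norm_num
  have hT2a : x ^ α * Real.log (x+1) ≤ 2 * x / (1-α) := by
    calc x ^ α * Real.log (x+1) ≤ x ^ α * ((x+1) ^ (1-α) / (1-α)) :=
          mul_le_mul_of_nonneg_left hlog2 hxa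
    _ ≤ x ^ α * (2 * x ^ (1-α) / (1-α)) := by
          gcongr
    _ = 2 * (x ^ α * x ^ (1-α)) / (1-α) := by ring
    _ = 2 * x / (1-α) := by rw [hprod]
  have hstep1 : ff α (x+1) ≤ (x ^ α + α * x ^ α / x) * Real.log (x+1) :=
    mul_le_mul_of_nonneg_right hpow_le hlogp
  have hsplit2 : (x ^ α + α * x ^ α / x) * Real.log (x+1)
      = x ^ α * Real.log (x+1) + (α/x) * (x ^ α * Real.log (x+1)) := by
    field_simp
  have hT1 : x ^ α * Real.log (x+1) ≤ x ^ α * Real.log x + x ^ α / x := by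
    calc x ^ α * Real.log (x+1) ≤ x ^ α * (Real.log x + 1/x) :=
          mul_le_mul_of_nonneg_left hlog1 hxa
    _ = x ^ α * Real.log x + x ^ α / x := by ring
  have hT2 : (α/x) * (x ^ α * Real.log (x+1)) ≤ (α/x) * (2 * x / (1-α)) :=
    mul_le_mul_of_nonneg_left hT2a (by positivity)
  have hT2' : (α/x) * (2 * x / (1-α)) = 2 * α / (1-α) := by field_simp
  have hA : x ^ α / x ≤ 1 := by rw [div_le_one hx0]; exact hxax
  have : ff α (x+1) = (x+1) ^ α * Real.log (x+1) := rfl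
  have hff : ff α x = x ^ α * Real.log x := rfl
  unfold ff
  linarith [hstep1, hsplit2.le, hsplit2.ge]

/-- Let α ∈ (0,1/2) and γ ≥ 0. Then there exist 0 < c < (1−α)/k_γ, ε > 0
and a strictly increasing sequence (m_i) of positive integers such that for every i there
is no integer a ≥ 1 with a + (γ+1)(4^a−1)/3 ∈ (c·k_γ·f(m_i), k_γ·f(m_i) + ε). -/
theorem stmt18 (α : ℝ) (hα0 : 0 < α) (hα : α < 1 / 2) (γ : ℕ) :
    ∃ c ε : ℝ, ∃ m : ℕ → ℕ,
      0 < c ∧ c < (1 - α) / kcoef α γ ∧ 0 < ε ∧ StrictMono m ∧ (∀ i, 0 < m i) ∧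
      ∀ i, ¬ ∃ a : ℕ, 1 ≤ a ∧
        c * kcoef α γ * ff α (m i) < (a : ℝ) + ((γ : ℝ) + 1) * ((4 : ℝ) ^ a - 1) / 3 ∧
        (a : ℝ) + ((γ : ℝ) + 1) * ((4 : ℝ) ^ a - 1) / 3 < kcoef α γ * ff α (m i) + ε := by
  have h1α : (0:ℝ) < 1 - α := by linarith
  have hγ1 : (0:ℝ) < (γ:ℝ) + 1 := by positivity
  have hγ0 : (0:ℝ) ≤ (γ:ℝ) := Nat.cast_nonneg γ
  set q : ℝ := ((γ:ℝ) + 2) / ((γ:ℝ) + 1) with hq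
  have hq1 : 1 < q := by rw [hq, lt_div_iff₀ hγ1]; linarith
  have hq2 : q ≤ 2 := by rw [hq, div_le_iff₀ hγ1]; linarith
  have hkq : kcoef α γ = 2 * (1 - α * q) := by rw [hq]; unfold kcoef; ring
  set k : ℝ := kcoef α γ with hkdef
  have hk0 : 0 < k := by rw [hkq]; nlinarith
  have hk2 : k < 2 * (1 - α) := by rw [hkq]; nlinarith
  have hchalf : (1/2 : ℝ) < (1 - α) / k := by rw [lt_div_iff₀ hk0]; linarith
  set C : ℝ := 1 + 2 * α / (1 - α) with hC
  have hC0 : 0 < C := by rw [hC]; positivity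
  have hK0 : 0 < k * C := mul_pos hk0 hC0
  clear_value q k C
  set g : ℕ → ℝ := fun a => (a:ℝ) + ((γ:ℝ) + 1) * ((4:ℝ) ^ a - 1) / 3 with hgdef
  have hgval : ∀ b : ℕ, (b:ℝ) + ((γ:ℝ) + 1) * ((4:ℝ) ^ b - 1) / 3 = g b := fun b => rfl
  clear_value g
  have hgmono : StrictMono g := by
    apply strictMono_nat_of_lt_succ
    intro a
    simp only [← hgval]
    push_cast
    have hps : (4:ℝ) ^ (a+1) = 4 * (4:ℝ) ^ a := by ring
    nlinarith [pow_pos (show (0:ℝ) < 4 by norm_num) a,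
      mul_pos hγ1 (pow_pos (show (0:ℝ) < 4 by norm_num) a)]
  have h4ge1 : ∀ a : ℕ, (1:ℝ) ≤ (4:ℝ) ^ a := fun a => by
    calc (1:ℝ) = 1 ^ a := (one_pow a).symm
    _ ≤ 4 ^ a := pow_le_pow_left₀ (by norm_num) (by norm_num) a
  have hg0 : ∀ a, 0 ≤ g a := by
    intro a
    simp only [← hgval]
    have := h4ge1 a
    have ha0 : (0:ℝ) ≤ (a:ℝ) := Nat.cast_nonneg a
    nlinarith
  have hg2 : ∀ a, (2:ℝ) ≤ g (a+1) := by
    intro a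
    simp only [← hgval]
    have h4 : (4:ℝ) ≤ (4:ℝ) ^ (a+1) := by
      calc (4:ℝ) = 4 ^ 1 := by norm_num
      _ ≤ 4 ^ (a+1) := pow_le_pow_right₀ (by norm_num) (by omega)
    have ha0 : (0:ℝ) ≤ (a:ℝ) := Nat.cast_nonneg a
    push_cast
    nlinarith
  set A₀ : ℕ := ⌈(3/2 : ℝ) * (1 + k * C)⌉₊ with hA₀
  have hthr : ∀ a : ℕ, A₀ ≤ a → 2 * g a + (1 + k * C) ≤ g (a+1) := by
    intro a ha
    have h2a : (a:ℝ) + 1 ≤ (2:ℝ) ^ a := by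
      have := @Nat.lt_two_pow_self a
      have : (a:ℕ) + 1 ≤ 2 ^ a := this
      exact_mod_cast this
    have hAa : (3/2 : ℝ) * (1 + k * C) ≤ (a:ℝ) := by
      calc (3/2 : ℝ) * (1 + k * C) ≤ (A₀ : ℝ) := Nat.le_ceil _
      _ ≤ (a:ℝ) := by exact_mod_cast ha
    have h4 : (4:ℝ) ^ a = (2:ℝ) ^ a * (2:ℝ) ^ a := by
      rw [← mul_pow]; norm_num
    have hlow : (3/2 : ℝ) * (1 + k * C) ≤ (2:ℝ) ^ a := by linarith
    have hp : (3/2 : ℝ) * (1 + k * C) * ((a:ℝ) + 1) ≤ (4:ℝ) ^ a := by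
      rw [h4]
      exact mul_le_mul hlow h2a (by positivity) (pow_nonneg (by norm_num) a)
    have ha0 : (0:ℝ) ≤ (a:ℝ) := Nat.cast_nonneg a
    have hp2 : 3 * ((a:ℝ) + k * C) ≤ 2 * (4:ℝ) ^ a := by
      have e1 : (3/2:ℝ) * ((a:ℝ) + k * C) ≤ (3/2:ℝ) * (1 + k * C) * ((a:ℝ) + 1) := by
        nlinarith [mul_nonneg ha0 hK0.le]
      linarith
    simp only [← hgval]
    push_cast
    rw [pow_succ]
    nlinarith [hp2, mul_nonneg hγ0 (show (0:ℝ) ≤ 2 * (4:ℝ) ^ a + 1 by positivity)]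
  have hff01 : ∀ n : ℕ, n ≤ 1 → ff α n = 0 := by
    intro n hn
    interval_cases n
    · show ff α ((0:ℕ):ℝ) = 0
      simp [ff, Real.zero_rpow hα0.ne']
    · show ff α ((1:ℕ):ℝ) = 0
      simp [ff]
  have hprop : ∀ a : ℕ, ∃ n : ℕ, 1 ≤ n ∧ k * ff α n < g (a+1) - 1 ∧
      g (a+1) - 1 ≤ k * ff α (n+1) := by
    intro a
    set S : Set ℕ := {n : ℕ | g (a+1) - 1 ≤ k * ff α n} with hS
    have hne : S.Nonempty := by
      obtain ⟨n, hn⟩ := ff_unbounded_aux hα0 ((g (a+1) - 1) / k)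
      refine ⟨n, ?_⟩
      rw [div_le_iff₀ hk0] at hn
      simp only [hS, Set.mem_setOf_eq]
      linarith [hn]
    have hmem : sInf S ∈ S := Nat.sInf_mem hne
    have hmem' : g (a+1) - 1 ≤ k * ff α ((sInf S : ℕ) : ℝ) := hmem
    have h2 : 2 ≤ sInf S := by
      by_contra h
      push_neg at h
      have h01 : ff α ((sInf S : ℕ) : ℝ) = 0 := hff01 (sInf S) (by omega)
      rw [h01] at hmem'
      have := hg2 a
      linarith
    refine ⟨sInf S - 1, by omega, ?_, ?_⟩
    · have hnot : (sInf S - 1) ∉ S := Nat.notMem_of_lt_sInf (by omega)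
      simp only [hS, Set.mem_setOf_eq, not_le] at hnot
      exact hnot
    · have heq : ((sInf S - 1 : ℕ) : ℝ) + 1 = ((sInf S : ℕ) : ℝ) := by
        have h1 : 1 ≤ sInf S := by omega
        push_cast [h1]
        ring
      rw [heq]
      exact hmem'
  choose N hN1 hN2 hN3 using hprop
  have hlow : ∀ a : ℕ, A₀ ≤ a → 2 * g a ≤ k * ff α (N a) := by
    intro a ha
    have hstep := ff_step_aux hα0 (by linarith : α < 1) (N a) (hN1 a)
    have h3 := hN3 a
    have h4 : k * ff α ((N a : ℝ) + 1) ≤ k * (ff α (N a) + C) := by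
      apply mul_le_mul_of_nonneg_left _ hk0.le
      rw [hC]
      exact hstep
    have hth := hthr a ha
    have h5 : k * (ff α (N a) + C) = k * ff α (N a) + k * C := by ring
    linarith
  refine ⟨1/2, 1, fun i => N (A₀ + i), by norm_num, hchalf, one_pos, ?_, fun i => hN1 _, ?_⟩
  · apply strictMono_nat_of_lt_succ
    intro i
    show N (A₀ + i) < N (A₀ + (i + 1))
    have heq : A₀ + (i + 1) = (A₀ + i) + 1 := by omega
    rw [heq]
    have ha := hlow ((A₀ + i) + 1) (by omega)
    have hb := hN2 (A₀ + i)
    have hg0' := hg0 ((A₀ + i) + 1)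
    have hgm : g ((A₀ + i) + 1) ≤ 2 * g ((A₀ + i) + 1) := by linarith
    have hff : ff α (N (A₀ + i)) < ff α (N ((A₀ + i) + 1)) := by
      have hkk : k * ff α (N (A₀ + i)) < k * ff α (N ((A₀ + i) + 1)) := by linarith
      exact (mul_lt_mul_iff_right₀ hk0).mp hkk
    by_contra h
    push_neg at h
    exact absurd (ff_mono_aux hα0.le (hN1 _) h) (not_le.mpr hff)
  · intro i
    rintro ⟨a', ha'1, hlt1, hlt2⟩
    rw [hgval a'] at hlt1 hlt2
    have hlo := hlow (A₀ + i) (Nat.le_add_right _ _)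
    have hhi := hN2 (A₀ + i)
    have h5 : g (A₀ + i) < g a' := by linarith
    have h6 : A₀ + i < a' := hgmono.lt_iff_lt.mp h5
    have h7 : g ((A₀ + i) + 1) ≤ g a' := hgmono.monotone (by omega)
    linarith
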